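/- With the same setup as in the lemma on T(a,b,c): if c = 0 and a = b = 0 then T(a,b,c) = (q-1)(q^2-1); if c = 0 and exactly one of a, b is zero then T(a,b,c) = 1 - q^2; if c = 0 and a, b ∈ F_q^* then T(a,b,c) = q + 1; if c ≠ 0 and a = b = 0 then T(a,b,c) = 1 - q. -/

import Mathlib

/-- The canonical additive character of a finite field of characteristic `p`. -/
noncomputable def canAddChar (p : ℕ) (F : Type) [Field F] [Fintype F]
    [Algebra (ZMod p) F] (x : F) : ℂ :=
  Complex.exp (2 * Real.pi * Complex.I * ((Algebra.trace (ZMod p) F x).val : ℂ) / p)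

/-- The character sum `T(a,b,c) = Σ_{y ∈ F^*} Σ_{x ∈ E^*}
`χ(y·a·N(x)^{e₁} + y·b·N(x)^{e₂})·χ'(y·c·x^{e₃})`, where `F = F_q`, `E = F_{q²}`,
`χ, χ'` are the canonical additive characters and `N = Algebra.norm F` (`N(x) = x^{q+1}`). -/
noncomputable def Tsum (p : ℕ) (F E : Type) [Field F] [Fintype F] [DecidableEq F]
    [Field E] [Fintype E] [DecidableEq E] [Algebra (ZMod p) F] [Algebra (ZMod p) E]
    [Algebra F E] (e₁ e₂ e₃ : ℤ) (a b : F) (c : E) : ℂ :=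
  ∑ y ∈ Finset.univ.filter (fun y : F => y ≠ 0),
    ∑ x ∈ Finset.univ.filter (fun x : E => x ≠ 0),
      canAddChar p F (y * a * (Algebra.norm F x) ^ e₁ + y * b * (Algebra.norm F x) ^ e₂) *
        canAddChar p E (algebraMap F E y * c * x ^ e₃)

open Finset

section Char
variable (p : ℕ) [Fact p.Prime] (K : Type) [Field K] [Fintype K] [DecidableEq K] [Algebra (ZMod p) K]

lemma exp_nat_congr (m n : ℕ) (h : m % p = n % p) :
    Complex.exp (2 * Real.pi * Complex.I * m / p) =
      Complex.exp (2 * Real.pi * Complex.I * n / p) := by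
  have hp : (p : ℂ) ≠ 0 := Nat.cast_ne_zero.mpr (Fact.out : p.Prime).ne_zero
  have hk : m = p * (m / p) + m % p := (Nat.div_add_mod m p).symm
  have hl : n = p * (n / p) + n % p := (Nat.div_add_mod n p).symm
  set k := m / p; set l := n / p
  rw [hk, hl, h]
  push_cast
  rw [mul_add, mul_add, add_div, add_div]
  rw [Complex.exp_add, Complex.exp_add]
  congr 1
  have e1 : 2 * (Real.pi:ℂ) * Complex.I * ((p:ℂ) * k) / p = (k:ℂ) * (2 * Real.pi * Complex.I) := by
    field_simp
  have e2 : 2 * (Real.pi:ℂ) * Complex.I * ((p:ℂ) * l) / p = (l:ℂ) * (2 * Real.pi * Complex.I) := by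
    field_simp
  rw [e1, e2, Complex.exp_nat_mul_two_pi_mul_I, Complex.exp_nat_mul_two_pi_mul_I]

lemma cAC_zero : canAddChar p K 0 = 1 := by
  simp [canAddChar]

lemma cAC_add (u v : K) :
    canAddChar p K (u + v) = canAddChar p K u * canAddChar p K v := by
  unfold canAddChar
  rw [map_add, ← Complex.exp_add]
  have : 2 * (Real.pi:ℂ) * Complex.I * ((Algebra.trace (ZMod p) K u).val : ℂ) / p +
      2 * (Real.pi:ℂ) * Complex.I *
        ((Algebra.trace (ZMod p) K v).val : ℂ) / p =
      2 * (Real.pi:ℂ) * Complex.I *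
        (((Algebra.trace (ZMod p) K u).val + (Algebra.trace (ZMod p) K v).val : ℕ) : ℂ) / p := by
    push_cast; ring
  rw [this]
  exact (exp_nat_congr p _ _ (by rw [ZMod.val_add]; simp [Nat.mod_mod_of_dvd])).symm

lemma cAC_exists_ne_one : ∃ v : K, canAddChar p K v ≠ 1 := by
  have hsurj := Algebra.trace_surjective (ZMod p) K
  obtain ⟨v, hv⟩ := hsurj 1
  refine ⟨v, ?_⟩
  unfold canAddChar
  have hlt : 1 < p := (Fact.out : p.Prime).one_lt
  haveI : Fact (1 < p) := ⟨hlt⟩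
  rw [hv, ZMod.val_one p]
  intro h
  rw [Complex.exp_eq_one_iff] at h
  obtain ⟨n, hn⟩ := h
  have hp : (p : ℂ) ≠ 0 := Nat.cast_ne_zero.mpr (Fact.out : p.Prime).ne_zero
  have h2 : (2 * (Real.pi:ℂ) * Complex.I) ≠ 0 := by
    simp [Real.pi_ne_zero, Complex.I_ne_zero]
  have : (1 : ℂ) = n * p := by
    field_simp at hn
    push_cast at hn
    linear_combination hn
  have : ((1 : ℤ) : ℂ) = ((n * p : ℤ) : ℂ) := by push_cast; exact this
  have h1 : (1 : ℤ) = n * p := Int.cast_injective this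
  have hdvd : (p : ℤ) ∣ 1 := ⟨n, by linarith⟩
  have hle := Int.le_of_dvd one_pos hdvd
  have := (Fact.out : p.Prime).one_lt
  omega

lemma sum_cAC (t : K) :
    ∑ y : K, canAddChar p K (y * t) = if t = 0 then (Fintype.card K : ℂ) else 0 := by
  split_ifs with ht
  · subst ht; simp [cAC_zero]
  · obtain ⟨v, hv⟩ := cAC_exists_ne_one p K
    have key : canAddChar p K ((v * t⁻¹) * t) * (∑ y : K, canAddChar p K (y * t))
        = ∑ y : K, canAddChar p K (y * t) := by
      rw [Finset.mul_sum]
      rw [← Equiv.sum_comp (Equiv.addLeft (v * t⁻¹)) (fun y => canAddChar p K (y * t))]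
      refine Finset.sum_congr rfl fun y _ => ?_
      rw [← cAC_add]
      congr 1
      simp [Equiv.addLeft]
      ring
    have hval : canAddChar p K ((v * t⁻¹) * t) = canAddChar p K v := by
      congr 1; field_simp
    rw [hval] at key
    have h0 : (canAddChar p K v - 1) * (∑ y : K, canAddChar p K (y * t)) = 0 := by
      linear_combination key
    rcases mul_eq_zero.mp h0 with h | h
    · exact absurd (by linear_combination h : canAddChar p K v = 1) hv
    · exact h
end Char

section GroupLemmas
open Finset

lemma sum_units {K : Type} [Field K] [Fintype K] [DecidableEq K] (f : K → ℂ) :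
    ∑ x ∈ univ.filter (fun x : K => x ≠ 0), f x = ∑ u : Kˣ, f u := by
  refine Finset.sum_bij' (fun x hx => Units.mk0 x (by simpa using (Finset.mem_filter.mp hx).2))
    (fun u _ => (u : K)) ?_ ?_ ?_ ?_ ?_
  · intro x hx; exact Finset.mem_univ _
  · intro u _; simp
  · intro x hx; simp
  · intro u _; simp
  · intro x hx; simp

lemma mysum_filter_ne_zero {K : Type} [Field K] [Fintype K] [DecidableEq K] (f : K → ℂ) :
    ∑ x ∈ univ.filter (fun x : K => x ≠ 0), f x = (∑ x : K, f x) - f 0 := by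
  have h : univ.filter (fun x : K => x ≠ 0) = univ.erase 0 := by
    ext x; simp [Finset.mem_erase, and_comm]
  rw [h, Finset.sum_erase_eq_sub (Finset.mem_univ _)]

lemma card_fiber_congr {G H : Type} [Group G] [Fintype G] [Group H] [DecidableEq H]
    (φ : G →* H) {w w' : H} (hw : ∃ g, φ g = w) (hw' : ∃ g, φ g = w') :
    (univ.filter fun g => φ g = w).card = (univ.filter fun g => φ g = w').card := by
  obtain ⟨g₀, hg₀⟩ := hw
  obtain ⟨g₁, hg₁⟩ := hw'
  refine Finset.card_bij' (fun g _ => g * g₀⁻¹ * g₁) (fun g _ => g * g₁⁻¹ * g₀) ?_ ?_ ?_ ?_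
  · intro g hg
    simp only [Finset.mem_filter, Finset.mem_univ, true_and] at hg ⊢
    simp [map_mul, hg, hg₀, hg₁]
  · intro g hg
    simp only [Finset.mem_filter, Finset.mem_univ, true_and] at hg ⊢
    simp [map_mul, hg, hg₀, hg₁]
  · intro g _; group
  · intro g _; group

lemma card_fiber_surj {G H : Type} [Group G] [Fintype G] [Group H] [Fintype H] [DecidableEq H]
    (φ : G →* H) (hφ : Function.Surjective φ) (w : H) :
    (univ.filter fun g => φ g = w).card = Fintype.card G / Fintype.card H := by
  have hconst : ∀ w' : H, (univ.filter fun g => φ g = w').card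
      = (univ.filter fun g => φ g = w).card := fun w' =>
    card_fiber_congr φ (hφ w') (hφ w)
  have htotal : ∑ w' : H, (univ.filter fun g => φ g = w').card = Fintype.card G := by
    rw [← Finset.card_eq_sum_card_fiberwise (fun g _ => Finset.mem_univ (φ g))]
    rfl
  rw [Finset.sum_congr rfl (fun w' _ => hconst w'), Finset.sum_const, smul_eq_mul] at htotal
  have hcardH : (univ : Finset H).card = Fintype.card H := rfl
  rw [← htotal, hcardH, Nat.mul_div_cancel_left _ Fintype.card_pos]

lemma sum_comp_surj {G H : Type} [Group G] [Fintype G] [Group H] [Fintype H] [DecidableEq H]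
    (φ : G →* H) (hφ : Function.Surjective φ) (f : H → ℂ) :
    ∑ g : G, f (φ g) = ((Fintype.card G / Fintype.card H : ℕ) : ℂ) * ∑ w : H, f w := by
  rw [← Finset.sum_fiberwise univ (fun g => φ g) (fun g => f (φ g))]
  rw [Finset.mul_sum]
  refine Finset.sum_congr rfl fun w _ => ?_
  have : ∑ g ∈ univ.filter (fun g => φ g = w), f (φ g)
      = ∑ _g ∈ univ.filter (fun g => φ g = w), f w :=
    Finset.sum_congr rfl (fun g hg => by rw [(Finset.mem_filter.mp hg).2])
  rw [this, Finset.sum_const, card_fiber_surj φ hφ w]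
  simp [mul_comm]

lemma zpow_surj_of_coprime {G : Type} [CommGroup G] [Fintype G] (n : ℤ)
    (h : Int.gcd (Fintype.card G) n = 1) : Function.Surjective (fun g : G => g ^ n) := by
  obtain ⟨u, v, huv⟩ : ∃ u v : ℤ, (Fintype.card G : ℤ) * u + n * v = 1 := by
    refine ⟨Int.gcdA (Fintype.card G) n, Int.gcdB (Fintype.card G) n, ?_⟩
    have hg := Int.gcd_eq_gcd_ab (Fintype.card G) n
    rw [h] at hg
    exact_mod_cast hg.symm
  intro t
  refine ⟨t ^ v, ?_⟩
  have hcard : t ^ (Fintype.card G : ℤ) = 1 := by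
    rw [zpow_natCast, pow_card_eq_one]
  show (t ^ v) ^ n = t
  rw [← zpow_mul, mul_comm v n, ← one_mul (t ^ (n * v)), ← one_zpow u, ← hcard,
    ← zpow_mul, ← zpow_add, huv, zpow_one]

section FieldLemmas
open Finset Polynomial

variable {q : ℕ} {F E : Type} [Field F] [Fintype F] [DecidableEq F]
  [Field E] [Fintype E] [DecidableEq E] [Algebra F E]

lemma card_pow_card_le (hq : 2 ≤ q) :
    (univ.filter fun z : E => z ^ q = z).card ≤ q := by
  classical
  set f : E[X] := X ^ q - X with hf
  have hdeg : f.natDegree = q := by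
    rw [hf]
    rw [Polynomial.natDegree_sub_eq_left_of_natDegree_lt]
    · exact Polynomial.natDegree_X_pow q
    · rw [Polynomial.natDegree_X_pow, Polynomial.natDegree_X]; omega
  have hf0 : f ≠ 0 := fun h => by simp [h] at hdeg; omega
  have hsub : (univ.filter fun z : E => z ^ q = z) ⊆ f.roots.toFinset := by
    intro z hz
    rw [Multiset.mem_toFinset, Polynomial.mem_roots hf0]
    have hz' := (Finset.mem_filter.mp hz).2
    simp [hf, Polynomial.IsRoot, sub_eq_zero, hz']
  calc (univ.filter fun z : E => z ^ q = z).card ≤ f.roots.toFinset.card :=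
        Finset.card_le_card hsub
    _ ≤ Multiset.card f.roots := f.roots.toFinset_card_le
    _ ≤ f.natDegree := f.card_roots'
    _ = q := hdeg

lemma mem_algebraMap_of_pow_card (hF : Fintype.card F = q) (z : E) (hz : z ^ q = z) :
    ∃ y : F, algebraMap F E y = z := by
  classical
  have hq : 2 ≤ q := hF ▸ Fintype.one_lt_card
  set A : Finset E := univ.image (algebraMap F E) with hA
  set B : Finset E := univ.filter fun z : E => z ^ q = z with hB
  have hAB : A ⊆ B := by
    intro w hw
    rw [hA, Finset.mem_image] at hw
    obtain ⟨y, _, rfl⟩ := hw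
    rw [hB, Finset.mem_filter]
    refine ⟨Finset.mem_univ _, ?_⟩
    rw [← map_pow]
    congr 1
    rw [← hF]
    exact FiniteField.pow_card y
  have hcardA : A.card = q := by
    rw [hA, Finset.card_image_of_injective _ (algebraMap F E).injective, Finset.card_univ, hF]
  have hAeqB : A = B := Finset.eq_of_subset_of_card_le hAB (by
    rw [hcardA]; exact card_pow_card_le hq)
  have hzB : z ∈ B := Finset.mem_filter.mpr ⟨Finset.mem_univ _, hz⟩
  rw [← hAeqB, hA, Finset.mem_image] at hzB
  obtain ⟨y, _, hy⟩ := hzB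
  exact ⟨y, hy⟩

lemma alg_norm_eq (p : ℕ) [Fact p.Prime] [Algebra (ZMod p) F]
    (hF : Fintype.card F = q) (hE : Fintype.card E = q ^ 2) (x : E) :
    algebraMap F E (Algebra.norm F x) = x ^ (q + 1) := by
  classical
  have hq : 2 ≤ q := hF ▸ Fintype.one_lt_card
  haveI : CharP F p := by rw [← Algebra.charP_iff (ZMod p) F p]; exact ZMod.charP p
  haveI : CharP E p := charP_of_injective_algebraMap (algebraMap F E).injective p
  obtain ⟨n, -, hn⟩ := FiniteField.card F p
  -- the Frobenius x ↦ x ^ q as an F-algebra equivalence of E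
  have hpowq : ∀ z : E, iterateFrobenius E p n z = z ^ q := fun z => by
    rw [iterateFrobenius_def, ← hn, hF]
  have hcommutes : ∀ y : F, iterateFrobenius E p n (algebraMap F E y) = algebraMap F E y := by
    intro y
    rw [hpowq, ← map_pow, ← hF, FiniteField.pow_card]
  let φ₀ : E →ₐ[F] E := { (iterateFrobenius E p n : E →+* E) with commutes' := hcommutes }
  have hbij : Function.Bijective φ₀ :=
    (Finite.injective_iff_bijective).mp (RingHom.injective (iterateFrobenius E p n))
  let φ : E ≃ₐ[F] E := AlgEquiv.ofBijective φ₀ hbij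
  have hφ : ∀ z : E, φ z = z ^ q := hpowq
  have hfinrank : Module.finrank F E = 2 := by
    have h := Module.card_eq_pow_finrank (K := F) (V := E)
    rw [hF, hE] at h
    exact (Nat.pow_right_injective hq h.symm)
  have hne : φ ≠ AlgEquiv.refl := by
    intro hcontra
    have hall : ∀ z : E, z ^ q = z := fun z => by
      rw [← hφ z, hcontra]; rfl
    have : (univ.filter fun z : E => z ^ q = z) = (univ : Finset E) := by
      ext z; simp [hall z]
    have hcard := card_pow_card_le (E := E) hq
    rw [this, Finset.card_univ, hE] at hcard
    nlinarith
  have hcardaut : Fintype.card (E ≃ₐ[F] E) = 2 := by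
    rw [← Nat.card_eq_fintype_card, IsGalois.card_aut_eq_finrank, hfinrank]
  have huniv : (univ : Finset (E ≃ₐ[F] E)) = {AlgEquiv.refl, φ} := by
    symm
    apply Finset.eq_of_subset_of_card_le (Finset.subset_univ _)
    rw [Finset.card_univ, hcardaut, Finset.card_insert_of_notMem (by simp [hne.symm]),
      Finset.card_singleton]
  rw [Algebra.norm_eq_prod_automorphisms, huniv, Finset.prod_pair (Ne.symm hne)]
  rw [hφ x, pow_succ, AlgEquiv.coe_refl, id_eq, mul_comm]
end FieldLemmas

section Surj
open Finset

variable {q : ℕ} {F E : Type} [Field F] [Fintype F] [DecidableEq F]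
  [Field E] [Fintype E] [DecidableEq E] [Algebra F E]

lemma card_units_E (hF : Fintype.card F = q) (hE : Fintype.card E = q ^ 2) :
    Fintype.card Eˣ = q ^ 2 - 1 := by
  rw [Fintype.card_units, hE]

lemma cast_card_units_E (hF : Fintype.card F = q) (hE : Fintype.card E = q ^ 2) :
    ((Fintype.card Eˣ : ℕ) : ℤ) = (q : ℤ) ^ 2 - 1 := by
  have hq : 2 ≤ q := hF ▸ Fintype.one_lt_card
  rw [card_units_E hF hE]
  have : 1 ≤ q ^ 2 := by nlinarith
  push_cast [this]
  ring

lemma norm_units_surj (p : ℕ) [Fact p.Prime] [Algebra (ZMod p) F]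
    (hF : Fintype.card F = q) (hE : Fintype.card E = q ^ 2) :
    Function.Surjective (Units.map (Algebra.norm F : E →* F) : Eˣ →* Fˣ) := by
  have hq : 2 ≤ q := hF ▸ Fintype.one_lt_card
  obtain ⟨g, hg⟩ := IsCyclic.exists_generator (α := Eˣ)
  have hord : orderOf g = Fintype.card Eˣ := (orderOf_eq_card_of_forall_mem_zpowers hg).trans (Nat.card_eq_fintype_card)
  intro t
  set z : Eˣ := Units.map (algebraMap F E : F →+* E).toMonoidHom t with hz
  have hzq : (z : E) ^ q = (z : E) := by
    rw [hz]
    show ((algebraMap F E) (t : F)) ^ q = (algebraMap F E) (t : F)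
    rw [← map_pow, ← hF, FiniteField.pow_card]
  have hz1 : z ^ ((q : ℤ) - 1) = 1 := by
    have hzq' : z ^ (q : ℤ) = z := by
      apply Units.ext
      rw [← zpow_natCast] at hzq
      simpa using hzq
    rw [sub_eq_add_neg, zpow_add, hzq', zpow_neg, zpow_one, mul_inv_cancel]
  obtain ⟨m, hm⟩ : ∃ m : ℤ, g ^ m = z := hg z
  have hdvd : ((Fintype.card Eˣ : ℕ) : ℤ) ∣ m * ((q : ℤ) - 1) := by
    rw [← hord]
    rw [orderOf_dvd_iff_zpow_eq_one]
    rw [zpow_mul, hm, hz1]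
  rw [cast_card_units_E hF hE] at hdvd
  have hfact : (q : ℤ) ^ 2 - 1 = ((q : ℤ) + 1) * ((q : ℤ) - 1) := by ring
  obtain ⟨k, hk⟩ : ((q : ℤ) + 1) ∣ m := by
    obtain ⟨k, hk⟩ := hdvd
    refine ⟨k, ?_⟩
    have hne : (q : ℤ) - 1 ≠ 0 := by
      have : (2 : ℤ) ≤ (q : ℤ) := by exact_mod_cast hq
      omega
    apply mul_right_cancel₀ hne
    rw [hfact] at hk
    linarith [hk]
  refine ⟨g ^ k, ?_⟩
  apply Units.ext
  apply (algebraMap F E).injective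
  have hcoe : (Units.map (Algebra.norm F : E →* F) (g ^ k) : F) = Algebra.norm F ((g ^ k : Eˣ) : E) := rfl
  rw [hcoe, alg_norm_eq p hF hE]
  have : (((g ^ k : Eˣ) : E)) ^ (q + 1) = (((g ^ k) ^ ((q : ℤ) + 1) : Eˣ) : E) := by
    push_cast
    rw [← zpow_natCast]
    push_cast
    ring_nf
  rw [this, ← zpow_mul, mul_comm k ((q:ℤ)+1), ← hk, hm]
  rfl

lemma mixed_surj (p : ℕ) [Fact p.Prime] [Algebra (ZMod p) F]
    (hF : Fintype.card F = q) (hE : Fintype.card E = q ^ 2) (e₃ : ℤ)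
    (he₃ : Int.gcd (q + 1) e₃ = 1) :
    Function.Surjective (fun yx : Fˣ × Eˣ =>
      Units.map ((algebraMap F E) : F →+* E).toMonoidHom yx.1 * yx.2 ^ e₃) := by
  have hq : 2 ≤ q := hF ▸ Fintype.one_lt_card
  obtain ⟨g, hg⟩ := IsCyclic.exists_generator (α := Eˣ)
  have hord : orderOf g = Fintype.card Eˣ := (orderOf_eq_card_of_forall_mem_zpowers hg).trans (Nat.card_eq_fintype_card)
  intro w
  obtain ⟨m, hm⟩ : ∃ m : ℤ, g ^ m = w := hg w
  obtain ⟨s, t, hst⟩ : ∃ s t : ℤ, ((q : ℤ) + 1) * s + e₃ * t = 1 := by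
    refine ⟨Int.gcdA (((q:ℤ) + 1)) e₃, Int.gcdB ((q:ℤ) + 1) e₃, ?_⟩
    have hgg := Int.gcd_eq_gcd_ab ((q:ℤ) + 1) e₃
    have : Int.gcd ((q:ℤ) + 1) e₃ = 1 := by exact_mod_cast he₃
    rw [this] at hgg
    exact_mod_cast hgg.symm
  set z : Eˣ := g ^ (((q : ℤ) + 1) * (s * m)) with hzdef
  have hz1 : z ^ ((q : ℤ) - 1) = 1 := by
    rw [hzdef, ← zpow_mul]
    have : ((q : ℤ) + 1) * (s * m) * ((q : ℤ) - 1) = ((q : ℤ) ^ 2 - 1) * (s * m) := by ring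
    rw [this, ← cast_card_units_E hF hE, zpow_mul, zpow_natCast, pow_card_eq_one, one_zpow]
  have hzq : ((z : Eˣ) : E) ^ q = ((z : Eˣ) : E) := by
    have hzq' : z ^ (q : ℤ) = z := by
      have := hz1
      rw [sub_eq_add_neg, zpow_add, zpow_neg, zpow_one] at this
      have h2 := mul_eq_one_iff_eq_inv.mp this
      rw [h2, inv_inv]
    calc ((z : Eˣ) : E) ^ q = ((z ^ (q : ℤ) : Eˣ) : E) := by
          rw [zpow_natCast]; rfl
      _ = ((z : Eˣ) : E) := by rw [hzq']
  obtain ⟨y₀, hy₀⟩ := mem_algebraMap_of_pow_card hF ((z : Eˣ) : E) hzq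
  have hy₀ne : y₀ ≠ 0 := by
    intro h
    rw [h, map_zero] at hy₀
    exact (Units.ne_zero z) hy₀.symm
  refine ⟨⟨Units.mk0 y₀ hy₀ne, g ^ (t * m)⟩, ?_⟩
  have h1 : Units.map ((algebraMap F E) : F →+* E).toMonoidHom (Units.mk0 y₀ hy₀ne) = z := by
    apply Units.ext
    exact hy₀
  show Units.map ((algebraMap F E) : F →+* E).toMonoidHom (Units.mk0 y₀ hy₀ne)
      * (g ^ (t * m)) ^ e₃ = w
  rw [h1, hzdef, ← zpow_mul, ← zpow_add, ← hm]
  congr 1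
  have : ((q:ℤ) + 1) * (s * m) + t * m * e₃ = (((q:ℤ) + 1) * s + e₃ * t) * m := by ring
  rw [this, hst, one_mul]
end Surj

open Finset in
lemma card_filter_ne_zero {K : Type} [Field K] [Fintype K] [DecidableEq K] :
    (univ.filter fun x : K => x ≠ 0).card = Fintype.card K - 1 := by
  have h : univ.filter (fun x : K => x ≠ 0) = univ.erase 0 := by
    ext x; simp [Finset.mem_erase, and_comm]
  rw [h, Finset.card_erase_of_mem (Finset.mem_univ _), Finset.card_univ]


open Finset

/-- Remaining cases of `T(a,b,c)`: if `c = 0` and `a = b = 0` then `T = (q-1)(q²-1)`;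
if `c = 0` and exactly one of `a, b` is zero then `T = 1 - q²`; if `c = 0` and
`a, b ∈ F_q^*` then `T = q + 1`; if `c ≠ 0` and `a = b = 0` then `T = 1 - q`. -/
theorem Tsum_values_other (p q : ℕ) [Fact p.Prime] (F E : Type) [Field F] [Fintype F]
    [DecidableEq F] [Field E] [Fintype E] [DecidableEq E] [Algebra (ZMod p) F]
    [Algebra (ZMod p) E] [Algebra F E] (hF : Fintype.card F = q) (hE : Fintype.card E = q ^ 2)
    (e₁ e₂ e₃ : ℤ) (he₃ : Int.gcd (q + 1) e₃ = 1)
    (he₁₂ : Int.gcd (q - 1) (e₂ - e₁) = 1) (hcong : ((q : ℤ) - 1) ∣ (e₃ - (e₁ + e₂)))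
    (a b : F) (c : E) :
    (c = 0 → a = 0 → b = 0 →
        Tsum p F E e₁ e₂ e₃ a b c = ((q : ℂ) - 1) * ((q : ℂ) ^ 2 - 1)) ∧
      (c = 0 → (a = 0 ∧ b ≠ 0) ∨ (a ≠ 0 ∧ b = 0) →
        Tsum p F E e₁ e₂ e₃ a b c = 1 - (q : ℂ) ^ 2) ∧
      (c = 0 → a ≠ 0 → b ≠ 0 →
        Tsum p F E e₁ e₂ e₃ a b c = (q : ℂ) + 1) ∧
      (c ≠ 0 → a = 0 → b = 0 →
        Tsum p F E e₁ e₂ e₃ a b c = 1 - (q : ℂ)) := by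
  have hq : 2 ≤ q := hF ▸ Fintype.one_lt_card
  have hq1 : 1 ≤ q ^ 2 := by nlinarith
  have hcardEf : (univ.filter fun x : E => x ≠ 0).card = q ^ 2 - 1 := by
    rw [card_filter_ne_zero, hE]
  have hcardFf : (univ.filter fun y : F => y ≠ 0).card = q - 1 := by
    rw [card_filter_ne_zero, hF]
  have hred : ∀ a b : F, Tsum p F E e₁ e₂ e₃ a b 0 =
      ∑ x ∈ univ.filter (fun x : E => x ≠ 0),
        ((if a * (Algebra.norm F x) ^ e₁ + b * (Algebra.norm F x) ^ e₂ = 0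
          then (q : ℂ) else 0) - 1) := by
    intro a b
    unfold Tsum
    rw [Finset.sum_comm]
    refine Finset.sum_congr rfl fun x hx => ?_
    have step : ∀ y ∈ univ.filter (fun y : F => y ≠ 0),
        canAddChar p F (y * a * (Algebra.norm F x) ^ e₁ + y * b * (Algebra.norm F x) ^ e₂) *
          canAddChar p E (algebraMap F E y * 0 * x ^ e₃)
        = canAddChar p F
            (y * (a * (Algebra.norm F x) ^ e₁ + b * (Algebra.norm F x) ^ e₂)) := by
      intro y _
      rw [mul_zero, zero_mul, cAC_zero, mul_one]
      congr 1
      ring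
    rw [Finset.sum_congr rfl step, mysum_filter_ne_zero, sum_cAC, zero_mul, cAC_zero, hF]
  refine ⟨?_, ?_, ?_, ?_⟩
  · -- c = 0, a = 0, b = 0
    rintro rfl rfl rfl
    unfold Tsum
    have : ∀ y ∈ univ.filter (fun y : F => y ≠ 0), ∀ x ∈ univ.filter (fun x : E => x ≠ 0),
        canAddChar p F (y * 0 * (Algebra.norm F x) ^ e₁ + y * 0 * (Algebra.norm F x) ^ e₂) *
          canAddChar p E (algebraMap F E y * 0 * x ^ e₃) = 1 := by
      intro y _ x _
      rw [mul_zero, zero_mul, zero_mul, add_zero, mul_zero, zero_mul, cAC_zero, cAC_zero,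
        one_mul]
    rw [Finset.sum_congr rfl fun y hy => Finset.sum_congr rfl (this y hy)]
    simp only [Finset.sum_const, nsmul_eq_mul, smul_eq_mul, mul_one, hcardEf, hcardFf]
    rw [Nat.cast_sub hq1, Nat.cast_sub (by omega : 1 ≤ q)]
    push_cast
    ring
  · -- c = 0, exactly one of a b zero
    rintro rfl h
    rcases h with ⟨rfl, hb⟩ | ⟨ha, rfl⟩
    · rw [hred]
      have hterm : ∀ x ∈ univ.filter (fun x : E => x ≠ 0),
          ((if (0:F) * (Algebra.norm F x) ^ e₁ + b * (Algebra.norm F x) ^ e₂ = 0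
            then (q : ℂ) else 0) - 1) = -1 := by
        intro x hx
        have hx0 : x ≠ 0 := by simpa using (Finset.mem_filter.mp hx).2
        have hN : Algebra.norm F x ≠ 0 := by rwa [Algebra.norm_ne_zero_iff]
        have hcond : ¬ ((0:F) * (Algebra.norm F x) ^ e₁ + b * (Algebra.norm F x) ^ e₂ = 0) := by
          rw [zero_mul, zero_add]
          exact mul_ne_zero hb (zpow_ne_zero _ hN)
        rw [if_neg hcond, zero_sub]
      rw [Finset.sum_congr rfl hterm, Finset.sum_const, hcardEf, nsmul_eq_mul,
        Nat.cast_sub hq1]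
      push_cast
      ring
    · rw [hred]
      have hterm : ∀ x ∈ univ.filter (fun x : E => x ≠ 0),
          ((if a * (Algebra.norm F x) ^ e₁ + (0:F) * (Algebra.norm F x) ^ e₂ = 0
            then (q : ℂ) else 0) - 1) = -1 := by
        intro x hx
        have hx0 : x ≠ 0 := by simpa using (Finset.mem_filter.mp hx).2
        have hN : Algebra.norm F x ≠ 0 := by rwa [Algebra.norm_ne_zero_iff]
        have hcond : ¬ (a * (Algebra.norm F x) ^ e₁ + (0:F) * (Algebra.norm F x) ^ e₂ = 0) := by
          rw [zero_mul, add_zero]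
          exact mul_ne_zero ha (zpow_ne_zero _ hN)
        rw [if_neg hcond, zero_sub]
      rw [Finset.sum_congr rfl hterm, Finset.sum_const, hcardEf, nsmul_eq_mul,
        Nat.cast_sub hq1]
      push_cast
      ring
  · -- c = 0, a ≠ 0, b ≠ 0
    rintro rfl ha hb
    rw [hred, sum_units]
    set ν : Eˣ →* Fˣ := Units.map (Algebra.norm F : E →* F) with hν
    set φ3 : Eˣ →* Fˣ := (zpowGroupHom (e₂ - e₁)).comp ν with hφ3
    have hw₀ne : -(a / b) ≠ 0 := by simp [ha, hb]
    set w₀ : Fˣ := Units.mk0 (-(a / b)) hw₀ne with hw₀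
    have hcond : ∀ x : Eˣ,
        (a * (Algebra.norm F (x : E)) ^ e₁ + b * (Algebra.norm F (x : E)) ^ e₂ = 0)
          ↔ φ3 x = w₀ := by
      intro x
      have ht : Algebra.norm F (x : E) ≠ 0 := by
        rw [Algebra.norm_ne_zero_iff]; exact Units.ne_zero x
      have hcoe : ((φ3 x : Fˣ) : F) = (Algebra.norm F (x : E)) ^ (e₂ - e₁) := by
        rw [hφ3, MonoidHom.comp_apply]
        show (((ν x) ^ (e₂ - e₁) : Fˣ) : F) = _
        rw [Units.val_zpow_eq_zpow_val]
        congr 1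
      rw [Units.ext_iff, hcoe, hw₀, Units.val_mk0]
      set t : F := Algebra.norm F (x : E)
      have h1 : t ^ e₁ ≠ 0 := zpow_ne_zero _ ht
      have h2 : t ^ e₂ ≠ 0 := zpow_ne_zero _ ht
      rw [zpow_sub₀ ht]
      constructor
      · intro h
        field_simp
        first
        | linear_combination h
        | linear_combination -h
        | linear_combination 2 * h
        | linear_combination -(2 : F) * h
      · intro h
        field_simp at h
        first
        | linear_combination h
        | linear_combination -h
        | linear_combination 2 * h
        | linear_combination -(2 : F) * h
    have hsurjν : Function.Surjective ν := norm_units_surj p hF hE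
    have hsurjz : Function.Surjective (zpowGroupHom (e₂ - e₁) : Fˣ →* Fˣ) := by
      have hgcd : Int.gcd (Fintype.card Fˣ) (e₂ - e₁) = 1 := by
        rw [Fintype.card_units, hF]
        have : ((q - 1 : ℕ) : ℤ) = (q : ℤ) - 1 := by
          rw [Nat.cast_sub (by omega : 1 ≤ q)]; norm_num
        rw [this]
        exact he₁₂
      exact zpow_surj_of_coprime (e₂ - e₁) hgcd
    have hsurj : Function.Surjective φ3 := by
      rw [hφ3, MonoidHom.coe_comp]
      exact hsurjz.comp hsurjν
    have hstep : ∀ x : Eˣ,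
        ((if a * (Algebra.norm F (x : E)) ^ e₁ + b * (Algebra.norm F (x : E)) ^ e₂ = 0
          then (q : ℂ) else 0) - 1)
        = ((if φ3 x = w₀ then (q : ℂ) else 0) - 1) := by
      intro x
      congr 1
      exact if_congr (hcond x) rfl rfl
    have hcomp : (∑ x : Eˣ, ((if φ3 x = w₀ then (q : ℂ) else 0) - 1))
        = ((Fintype.card Eˣ / Fintype.card Fˣ : ℕ) : ℂ)
            * ∑ w : Fˣ, ((if w = w₀ then (q : ℂ) else 0) - 1) :=
      sum_comp_surj φ3 hsurj (fun w => (if w = w₀ then (q : ℂ) else 0) - 1)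
    rw [Finset.sum_congr rfl (fun x _ => hstep x), hcomp]
    have hdiv : Fintype.card Eˣ / Fintype.card Fˣ = q + 1 := by
      have hfac : q ^ 2 - 1 = (q + 1) * (q - 1) := by
        have := Nat.sq_sub_sq q 1
        simpa using this
      rw [Fintype.card_units, Fintype.card_units, hE, hF, hfac]
      exact Nat.mul_div_cancel _ (by omega)
    have hsum : ∑ w : Fˣ, ((if w = w₀ then (q : ℂ) else 0) - 1) = 1 := by
      rw [Finset.sum_sub_distrib, Finset.sum_ite_eq' univ w₀ (fun _ => (q : ℂ)),
        if_pos (Finset.mem_univ _), Finset.sum_const, Finset.card_univ, Fintype.card_units, hF,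
        nsmul_eq_mul, mul_one, Nat.cast_sub (by omega : 1 ≤ q)]
      push_cast
      ring
    rw [hdiv, hsum]
    push_cast
    ring
  · -- c ≠ 0, a = b = 0
    rintro hc rfl rfl
    unfold Tsum
    have hstep1 : ∀ y ∈ univ.filter (fun y : F => y ≠ 0),
        ∑ x ∈ univ.filter (fun x : E => x ≠ 0),
          canAddChar p F (y * 0 * (Algebra.norm F x) ^ e₁ + y * 0 * (Algebra.norm F x) ^ e₂) *
            canAddChar p E (algebraMap F E y * c * x ^ e₃)
        = ∑ x : Eˣ, canAddChar p E (algebraMap F E y * c * (x : E) ^ e₃) := by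
      intro y _
      rw [← sum_units (fun x : E => canAddChar p E (algebraMap F E y * c * x ^ e₃))]
      refine Finset.sum_congr rfl fun x _ => ?_
      rw [mul_zero, zero_mul, zero_mul, add_zero, cAC_zero, one_mul]
    rw [Finset.sum_congr rfl hstep1,
      sum_units (fun y : F => ∑ x : Eˣ, canAddChar p E (algebraMap F E y * c * (x : E) ^ e₃))]
    have hpair : (∑ yx : Fˣ × Eˣ,
          canAddChar p E (algebraMap F E (yx.1 : F) * c * ((yx.2 : E)) ^ e₃))
        = ∑ u : Fˣ, ∑ x : Eˣ, canAddChar p E (algebraMap F E (u : F) * c * ((x : E)) ^ e₃) :=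
      Fintype.sum_prod_type _
    rw [← hpair]
    set A : Fˣ × Eˣ →* Eˣ :=
      (Units.map ((algebraMap F E) : F →+* E).toMonoidHom).comp (MonoidHom.fst Fˣ Eˣ) with hA
    set B : Fˣ × Eˣ →* Eˣ := (zpowGroupHom e₃).comp (MonoidHom.snd Fˣ Eˣ) with hB
    set φ4 : Fˣ × Eˣ →* Eˣ := A * B with hφ4def
    have hφ4 : ∀ yx : Fˣ × Eˣ,
        ((φ4 yx : Eˣ) : E) = algebraMap F E (yx.1 : F) * ((yx.2 : E)) ^ e₃ := by
      intro yx
      rw [hφ4def, MonoidHom.mul_apply, Units.val_mul]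
      have h1 : ((A yx : Eˣ) : E) = algebraMap F E (yx.1 : F) := rfl
      have h2 : ((B yx : Eˣ) : E) = ((yx.2 : E)) ^ e₃ := Units.val_zpow_eq_zpow_val yx.2 e₃
      rw [h1, h2]
    have hsurj4 : Function.Surjective φ4 := by
      have hcoe : ⇑φ4 = fun yx : Fˣ × Eˣ =>
          Units.map ((algebraMap F E) : F →+* E).toMonoidHom yx.1 * yx.2 ^ e₃ := rfl
      rw [hcoe]
      exact mixed_surj p hF hE e₃ he₃
    have hterm : ∀ yx : Fˣ × Eˣ,
        canAddChar p E (algebraMap F E (yx.1 : F) * c * ((yx.2 : E)) ^ e₃)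
        = canAddChar p E (c * ((φ4 yx : Eˣ) : E)) := by
      intro yx
      congr 1
      rw [hφ4 yx]
      ring
    have hcomp : (∑ yx : Fˣ × Eˣ, canAddChar p E (c * ((φ4 yx : Eˣ) : E)))
        = ((Fintype.card (Fˣ × Eˣ) / Fintype.card Eˣ : ℕ) : ℂ)
            * ∑ w : Eˣ, canAddChar p E (c * (w : E)) :=
      sum_comp_surj φ4 hsurj4 (fun w => canAddChar p E (c * (w : E)))
    rw [Finset.sum_congr rfl (fun yx _ => hterm yx), hcomp]
    have hcard : Fintype.card (Fˣ × Eˣ) / Fintype.card Eˣ = q - 1 := by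
      rw [Fintype.card_prod, Fintype.card_units, Fintype.card_units, hF, hE,
        Nat.mul_div_cancel _ (by
          have h4 : 4 ≤ q ^ 2 := by nlinarith
          omega)]
    have hsum : (∑ w : Eˣ, canAddChar p E (c * (w : E))) = -1 := by
      rw [← sum_units (fun x : E => canAddChar p E (c * x)), mysum_filter_ne_zero]
      have : ∀ x : E, canAddChar p E (c * x) = canAddChar p E (x * c) := fun x => by
        rw [mul_comm]
      rw [Finset.sum_congr rfl (fun x _ => this x), sum_cAC, if_neg hc, mul_zero, cAC_zero]
      ring
    rw [hcard, hsum, Nat.cast_sub (by omega : 1 ≤ q)]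
    push_cast
    ring
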